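/- Let X = X₁ ∘ X₂ be a joint distribution where X₁ takes values in {0,1}^ℓ, and let ρ be an encoding with H∞(X;ρ) ≥ k. For a prefix x₁, let ρ_{x₁} be the encoding of the conditional distribution X₂ | X₁ = x₁ given by ρ_{x₁}(x₂) = ρ(x₁ ∘ x₂). Call x₁ bad if H∞(X₂ | X₁ = x₁ ; ρ_{x₁}) ≤ r. Then Pr[X₁ is bad] ≤ 2^ℓ · 2^r · 2^{-k}. -/

import Mathlib

open scoped BigOperators ComplexOrder

namespace QExt

/-- Bit strings of length `n`. -/
abbrev BS (n : ℕ) := Fin n → Bool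

/-- Trace norm of a complex matrix: `Tr √(AᴴA)` (sum of singular values;
for Hermitian `A` this is the sum of the absolute values of the eigenvalues). -/
noncomputable def posSemidefSqrt {ι : Type} [Fintype ι] [DecidableEq ι]
    {A : Matrix ι ι ℂ} (hA : A.PosSemidef) : Matrix ι ι ℂ :=
  hA.1.eigenvectorUnitary.1 * Matrix.diagonal ((↑) ∘ (√·) ∘ hA.1.eigenvalues) *
    (star hA.1.eigenvectorUnitary : Matrix ι ι ℂ)

noncomputable def traceNorm {ι : Type} [Fintype ι] [DecidableEq ι]
    (A : Matrix ι ι ℂ) : ℝ :=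
  ((posSemidefSqrt (Matrix.posSemidef_conjTranspose_mul_self A)).trace).re

/-- Trace distance between two matrices. -/
noncomputable def traceDist {ι : Type} [Fintype ι] [DecidableEq ι]
    (A B : Matrix ι ι ℂ) : ℝ :=
  traceNorm (A - B) / 2

/-- A density matrix: positive semidefinite with trace 1. -/
def IsDensity {ι : Type} [Fintype ι] [DecidableEq ι] (ρ : Matrix ι ι ℂ) : Prop :=
  ρ.PosSemidef ∧ ρ.trace = 1

/-- A probability distribution on a finite set. -/
def IsDist {Λ : Type} [Fintype Λ] (D : Λ → ℝ) : Prop :=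
  (∀ a, 0 ≤ D a) ∧ ∑ a, D a = 1

/-- A flat distribution: uniform over its support. -/
def IsFlat {Λ : Type} [Fintype Λ] (D : Λ → ℝ) : Prop :=
  ∀ a b, D a ≠ 0 → D b ≠ 0 → D a = D b

/-- Min-entropy `H∞(D) = -log₂ max_a D(a)`. -/
noncomputable def minEntropy {Λ : Type} [Fintype Λ] (D : Λ → ℝ) : ℝ :=
  - Real.logb 2 (⨆ a, D a)

/-- A POVM indexed by `Λ`: positive semidefinite operators summing to the identity. -/
def IsPOVM {Λ ι : Type} [Fintype Λ] [Fintype ι] [DecidableEq ι]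
    (F : Λ → Matrix ι ι ℂ) : Prop :=
  (∀ x, (F x).PosSemidef) ∧ ∑ x, F x = 1

/-- Optimal probability of guessing `x ∼ X` from the encoding `ρ(x)`. -/
noncomputable def guessProb {Λ ι : Type} [Fintype Λ] [Fintype ι] [DecidableEq ι]
    (X : Λ → ℝ) (ρ : Λ → Matrix ι ι ℂ) : ℝ :=
  sSup {p : ℝ | ∃ F : Λ → Matrix ι ι ℂ,
    IsPOVM F ∧ p = ∑ x, X x * ((F x * ρ x).trace).re}

/-- Conditional min-entropy `H∞(X;ρ) = -log₂ guessProb`. -/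
noncomputable def condMinEntropy {Λ ι : Type} [Fintype Λ] [Fintype ι] [DecidableEq ι]
    (X : Λ → ℝ) (ρ : Λ → Matrix ι ι ℂ) : ℝ :=
  - Real.logb 2 (guessProb X ρ)

/-- The cq-state `U ∘ E(X,U) ∘ ρ(X)`, represented by its (subnormalized) blocks
indexed by the classical value `(y, z)`. -/
noncomputable def extState {Λ Y Z ι : Type} [Fintype Λ] [Fintype Y] [Fintype Z]
    [DecidableEq Z] [Fintype ι] [DecidableEq ι]
    (E : Λ → Y → Z) (X : Λ → ℝ) (ρ : Λ → Matrix ι ι ℂ) :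
    Y × Z → Matrix ι ι ℂ :=
  fun yz => ((Fintype.card Y : ℝ))⁻¹ • ∑ x, if E x yz.1 = yz.2 then X x • ρ x else 0

/-- The ideal state `U × ρ̄_X`: uniform classical part, average encoding. -/
noncomputable def idealState (Y Z : Type) [Fintype Y] [Fintype Z]
    {Λ ι : Type} [Fintype Λ] [Fintype ι] [DecidableEq ι]
    (X : Λ → ℝ) (ρ : Λ → Matrix ι ι ℂ) : Y × Z → Matrix ι ι ℂ :=
  fun _ => ((Fintype.card Y * Fintype.card Z : ℝ))⁻¹ • ∑ x, X x • ρ x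

/-- Trace distance between two cq states given by their blocks. -/
noncomputable def cqDist {Z ι : Type} [Fintype Z] [Fintype ι] [DecidableEq ι]
    (σ τ : Z → Matrix ι ι ℂ) : ℝ :=
  (∑ z, traceNorm (σ z - τ z)) / 2

/-- The extractor error `‖U ∘ E(X,U) ∘ ρ(X) − U × ρ̄_X‖_tr`. -/
noncomputable def extError {Λ Y Z ι : Type} [Fintype Λ] [Fintype Y] [Fintype Z]
    [DecidableEq Z] [Fintype ι] [DecidableEq ι]
    (E : Λ → Y → Z) (X : Λ → ℝ) (ρ : Λ → Matrix ι ι ℂ) : ℝ :=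
  cqDist (extState E X ρ) (idealState Y Z X ρ)

/-- Statistical (variational) distance between distributions. -/
noncomputable def statDist {Λ : Type} [Fintype Λ] (D₁ D₂ : Λ → ℝ) : ℝ :=
  (∑ a, |D₁ a - D₂ a|) / 2

/-- The output distribution `(U_d, C(X,U_d))` of a condenser. -/
noncomputable def condOut {n d n' : ℕ} (C : BS n → BS d → BS n') (X : BS n → ℝ) :
    BS d × BS n' → ℝ :=
  fun p => ((2 ^ d : ℝ))⁻¹ * ∑ x, if C x p.1 = p.2 then X x else 0

/-- `C` is an `(n,k₁) →_ε (n',k₂)` strong condenser. -/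
def IsStrongCondenser {n d n' : ℕ} (C : BS n → BS d → BS n')
    (k₁ k₂ : ℝ) (ε : ℝ) : Prop :=
  ∀ X : BS n → ℝ, IsDist X → k₁ ≤ minEntropy X →
    ∃ D' : BS d × BS n' → ℝ, IsDist D' ∧ (d : ℝ) + k₂ ≤ minEntropy D' ∧
      statDist (condOut C X) D' ≤ ε

/-- The classical pure state `|y⟩⟨y|`. -/
noncomputable def ketbra {d : ℕ} (y : BS d) : Matrix (BS d) (BS d) ℂ :=
  Matrix.of fun a b => if a = y ∧ b = y then 1 else 0

/-- The extension `ℰ ⊗ id_N` of a linear map on matrices. -/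
noncomputable def extendMap {ι κ : Type} [Fintype ι] [Fintype κ]
    (ℰ : Matrix ι ι ℂ →ₗ[ℂ] Matrix κ κ ℂ) (N : ℕ)
    (A : Matrix (ι × Fin N) (ι × Fin N) ℂ) : Matrix (κ × Fin N) (κ × Fin N) ℂ :=
  Matrix.of fun p q => ℰ (Matrix.of fun i j => A (i, p.2) (j, q.2)) p.1 q.1

/-- Completely positive trace-preserving map. -/
def IsCPTP {ι κ : Type} [Fintype ι] [Fintype κ]
    (ℰ : Matrix ι ι ℂ →ₗ[ℂ] Matrix κ κ ℂ) : Prop :=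
  (∀ (N : ℕ) (A : Matrix (ι × Fin N) (ι × Fin N) ℂ), A.PosSemidef →
      (extendMap ℰ N A).PosSemidef) ∧
  (∀ A : Matrix ι ι ℂ, (ℰ A).trace = A.trace)

set_option linter.unusedSectionVars false
variable {ι Λ : Type} [Fintype ι] [DecidableEq ι] [Fintype Λ] [DecidableEq Λ]

lemma psd_smul {c : ℂ} (hc : 0 ≤ c) {M : Matrix ι ι ℂ} (hM : M.PosSemidef) :
    (c • M).PosSemidef := by
  constructor
  · unfold Matrix.IsHermitian
    rw [Matrix.conjTranspose_smul, hM.1.eq, (IsSelfAdjoint.of_nonneg hc)]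
  · intro x
    exact (hM.smul hc).2 x

lemma psd_trace_re_nonneg {M : Matrix ι ι ℂ} (hM : M.PosSemidef) : 0 ≤ M.trace.re := by
  rw [Matrix.trace, Complex.re_sum]
  refine Finset.sum_nonneg fun i _ => ?_
  have h2 : (0:ℂ) ≤ M i i := hM.diag_nonneg
  exact (Complex.le_def.mp h2).1

lemma psd_trace_mul_re_nonneg {A B : Matrix ι ι ℂ} (hA : A.PosSemidef) (hB : B.PosSemidef) :
    0 ≤ ((A * B).trace).re := by
  obtain ⟨S, hS, hSS⟩ : ∃ S : Matrix ι ι ℂ, S.PosSemidef ∧ S * S = A := by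
    open scoped MatrixOrder in
    exact ⟨CFC.sqrt A, Matrix.nonneg_iff_posSemidef.mp (CFC.sqrt_nonneg A), CFC.sqrt_mul_sqrt_self A hA.nonneg⟩
  have h2 : (A*B).trace = (S * B * S).trace := by
    conv_lhs => rw [← hSS]
    rw [Matrix.mul_assoc, Matrix.trace_mul_comm, Matrix.mul_assoc]
  rw [h2]
  have : (S * B * S).PosSemidef := by
    have := hB.mul_mul_conjTranspose_same S
    rwa [hS.1.eq] at this
  exact psd_trace_re_nonneg this

lemma psd_sum (s : Finset Λ) (F : Λ → Matrix ι ι ℂ) (h : ∀ x ∈ s, (F x).PosSemidef) :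
    (∑ x ∈ s, F x).PosSemidef := by
  classical
  induction s using Finset.induction with
  | empty => simpa using Matrix.PosSemidef.zero
  | insert _ _ hx ih =>
    rw [Finset.sum_insert hx]
    exact (h _ (Finset.mem_insert_self _ _)).add (ih fun x hx => h x (Finset.mem_insert_of_mem hx))

lemma povm_le_one {F : Λ → Matrix ι ι ℂ}
    (h1 : ∀ x, (F x).PosSemidef) (h2 : ∑ x, F x = 1) (x : Λ) :
    (1 - F x).PosSemidef := by
  have : (1 : Matrix ι ι ℂ) - F x = ∑ y ∈ Finset.univ.erase x, F y := by
    rw [← h2, ← Finset.add_sum_erase _ _ (Finset.mem_univ x)]; abel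
  rw [this]
  exact psd_sum _ _ fun y _ => h1 y

lemma guessProb_bddAbove (X : Λ → ℝ) (ρ : Λ → Matrix ι ι ℂ)
    (hX : ∀ a, 0 ≤ X a) (hρ : ∀ p, IsDensity (ρ p)) :
    BddAbove {p : ℝ | ∃ F : Λ → Matrix ι ι ℂ,
      IsPOVM F ∧ p = ∑ x, X x * ((F x * ρ x).trace).re} := by
  refine ⟨∑ x, X x, ?_⟩
  rintro p ⟨F, hF, rfl⟩
  refine Finset.sum_le_sum fun x _ => ?_
  have h1 : ((F x * ρ x).trace).re ≤ 1 := by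
    have hnn := psd_trace_mul_re_nonneg (povm_le_one hF.1 hF.2 x) (hρ x).1
    have hexp : ((1 - F x) * ρ x).trace = (ρ x).trace - (F x * ρ x).trace := by
      rw [Matrix.sub_mul, Matrix.one_mul, Matrix.trace_sub]
    rw [hexp, (hρ x).2, Complex.sub_re] at hnn
    simpa using hnn
  calc X x * ((F x * ρ x).trace).re ≤ X x * 1 := mul_le_mul_of_nonneg_left h1 (hX x)
    _ = X x := mul_one _

lemma le_guessProb (X : Λ → ℝ) (ρ : Λ → Matrix ι ι ℂ)
    (hX : ∀ a, 0 ≤ X a) (hρ : ∀ p, IsDensity (ρ p))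
    {F : Λ → Matrix ι ι ℂ} (hF : IsPOVM F) :
    ∑ x, X x * ((F x * ρ x).trace).re ≤ guessProb X ρ :=
  le_csSup (guessProb_bddAbove X ρ hX hρ) ⟨F, hF, rfl⟩

lemma guessProb_le_rpow {k : ℝ} (X : Λ → ℝ) (ρ : Λ → Matrix ι ι ℂ)
    (hk : k ≤ condMinEntropy X ρ) : guessProb X ρ ≤ (2:ℝ) ^ (-k) := by
  rcases le_or_gt (guessProb X ρ) 0 with h | h
  · exact h.trans (Real.rpow_pos_of_pos two_pos _).le
  · have h1 : Real.logb 2 (guessProb X ρ) ≤ -k := by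
      unfold condMinEntropy at hk; linarith
    calc guessProb X ρ = (2:ℝ) ^ Real.logb 2 (guessProb X ρ) :=
          (Real.rpow_logb two_pos (by norm_num) h).symm
      _ ≤ (2:ℝ) ^ (-k) := Real.rpow_le_rpow_of_exponent_le one_le_two h1

/-- trivial POVM: all weight on one outcome -/
lemma trivPOVM (x₀ : Λ) :
    IsPOVM (fun x : Λ => if x = x₀ then (1 : Matrix ι ι ℂ) else 0) := by
  constructor
  · intro x; dsimp only; split
    · exact Matrix.PosSemidef.one
    · exact Matrix.PosSemidef.zero
  · simp

lemma rpow_neg_le_guessProb {r : ℝ} (X : Λ → ℝ) (ρ : Λ → Matrix ι ι ℂ)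
    (hX : ∀ a, 0 ≤ X a) (hρ : ∀ p, IsDensity (ρ p))
    (x₀ : Λ) (hx₀ : 0 < X x₀)
    (hr : condMinEntropy X ρ ≤ r) : (2:ℝ) ^ (-r) ≤ guessProb X ρ := by
  have hpos : 0 < guessProb X ρ := by
    have hle := le_guessProb X ρ hX hρ (trivPOVM x₀)
    refine lt_of_lt_of_le ?_ hle
    have : ∀ x : Λ, X x * (((if x = x₀ then (1:Matrix ι ι ℂ) else 0) * ρ x).trace).re
        = if x = x₀ then X x₀ else 0 := by
      intro x; split
      · subst x; rw [Matrix.one_mul, (hρ x₀).2]; simp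
      · simp
    rw [Finset.sum_congr rfl fun x _ => this x]
    simpa using hx₀
  have h1 : -r ≤ Real.logb 2 (guessProb X ρ) := by
    unfold condMinEntropy at hr; linarith
  calc (2:ℝ) ^ (-r) ≤ (2:ℝ) ^ Real.logb 2 (guessProb X ρ) :=
        Real.rpow_le_rpow_of_exponent_le one_le_two h1
    _ = guessProb X ρ := Real.rpow_logb two_pos (by norm_num) hpos


omit [DecidableEq Λ]


/-- Prefix lemma: the probability that a prefix `x₁` is bad (the conditional
source given `x₁` has conditional min-entropy at most `r`) is at most `2^ℓ 2^r 2^{-k}`. -/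
theorem stmt3 {ℓ n₂ dm : ℕ} (k r : ℝ)
    (X : BS ℓ × BS n₂ → ℝ) (hX : IsDist X)
    (ρ : BS ℓ × BS n₂ → Matrix (Fin dm) (Fin dm) ℂ) (hρ : ∀ p, IsDensity (ρ p))
    (hk : k ≤ condMinEntropy X ρ)
    (B : Finset (BS ℓ))
    (hB : ∀ x₁ ∈ B, 0 < ∑ x₂, X (x₁, x₂) ∧
      condMinEntropy (fun x₂ => X (x₁, x₂) / ∑ x₂', X (x₁, x₂'))
        (fun x₂ => ρ (x₁, x₂)) ≤ r) :
    ∑ x₁ ∈ B, ∑ x₂, X (x₁, x₂) ≤ (2 : ℝ) ^ ℓ * (2 : ℝ) ^ r * (2 : ℝ) ^ (-k) := by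
  classical
  set S : ℝ := ∑ x₁ ∈ B, ∑ x₂, X (x₁, x₂) with hSdef
  have hS0 : 0 ≤ S := Finset.sum_nonneg fun x₁ _ =>
    Finset.sum_nonneg fun x₂ _ => hX.1 _
  have hS1 : S ≤ 1 := by
    rw [hSdef, ← hX.2, Fintype.sum_prod_type]
    exact Finset.sum_le_sum_of_subset_of_nonneg (Finset.subset_univ B)
      (fun _ _ _ => Finset.sum_nonneg fun _ _ => hX.1 _)
  have key : ∀ ε : ℝ, 0 < ε →
      ((2:ℝ) ^ (-r) - ε) * S ≤ (2:ℝ) ^ ℓ * (2:ℝ) ^ (-k) := by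
    intro ε hε
    -- choose a near-optimal POVM for each bad prefix
    have hch : ∀ x₁ : BS ℓ, ∃ G : BS n₂ → Matrix (Fin dm) (Fin dm) ℂ, IsPOVM G ∧
        (x₁ ∈ B → ((2:ℝ) ^ (-r) - ε) * (∑ x₂, X (x₁, x₂)) ≤
          ∑ x₂, X (x₁, x₂) * ((G x₂ * ρ (x₁, x₂)).trace).re) := by
      intro x₁
      by_cases hx₁ : x₁ ∈ B
      · obtain ⟨hP, hr⟩ := hB x₁ hx₁
        set P : ℝ := ∑ x₂, X (x₁, x₂) with hPdef
        set D : BS n₂ → ℝ := fun x₂ => X (x₁, x₂) / P with hDdef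
        have hDnn : ∀ a, 0 ≤ D a := fun a => div_nonneg (hX.1 _) hP.le
        obtain ⟨x₂₀, hx₂₀⟩ : ∃ x₂₀, 0 < X (x₁, x₂₀) := by
          by_contra h
          push_neg at h
          exact absurd (Finset.sum_nonpos fun x₂ _ => h x₂) (not_le.mpr hP)
        have hDx₀ : 0 < D x₂₀ := div_pos hx₂₀ hP
        have hlow := rpow_neg_le_guessProb D (fun x₂ => ρ (x₁, x₂)) hDnn
          (fun x₂ => hρ (x₁, x₂)) x₂₀ hDx₀ hr
        have hlt : (2:ℝ) ^ (-r) - ε < guessProb D (fun x₂ => ρ (x₁, x₂)) := by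
          linarith
        rw [guessProb] at hlt
        have hne : {p : ℝ | ∃ F : BS n₂ → Matrix (Fin dm) (Fin dm) ℂ,
            IsPOVM F ∧ p = ∑ x₂, D x₂ * ((F x₂ * ρ (x₁, x₂)).trace).re}.Nonempty :=
          ⟨_, ⟨_, trivPOVM x₂₀, rfl⟩⟩
        obtain ⟨p, hpmem, hp⟩ := exists_lt_of_lt_csSup hne hlt
        obtain ⟨G, hG, rfl⟩ := hpmem
        refine ⟨G, hG, fun _ => ?_⟩
        have heq : (∑ x₂, D x₂ * ((G x₂ * ρ (x₁, x₂)).trace).re) * P =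
            ∑ x₂, X (x₁, x₂) * ((G x₂ * ρ (x₁, x₂)).trace).re := by
          rw [Finset.sum_mul]
          refine Finset.sum_congr rfl fun x₂ _ => ?_
          rw [hDdef]
          field_simp
        rw [← heq]
        exact mul_le_mul_of_nonneg_right hp.le hP.le
      · exact ⟨_, trivPOVM (fun _ => false), fun h => absurd h hx₁⟩
    choose G hG1 hG2 using hch
    set c : ℝ := ((2:ℝ) ^ ℓ)⁻¹ with hcdef
    have hc0 : 0 < c := by positivity
    set F : BS ℓ × BS n₂ → Matrix (Fin dm) (Fin dm) ℂ :=
      fun p => ((c : ℝ) : ℂ) • G p.1 p.2 with hFdef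
    have hF : IsPOVM F := by
      constructor
      · intro p
        exact psd_smul (by rw [Complex.zero_le_real]; exact hc0.le) ((hG1 p.1).1 p.2)
      · rw [hFdef]
        rw [Fintype.sum_prod_type]
        have : ∀ x₁ : BS ℓ, ∑ x₂ : BS n₂, ((c : ℝ) : ℂ) • G x₁ x₂
            = ((c : ℝ) : ℂ) • (1 : Matrix (Fin dm) (Fin dm) ℂ) := by
          intro x₁
          rw [← Finset.smul_sum, (hG1 x₁).2]
        rw [Finset.sum_congr rfl fun x₁ _ => this x₁, Finset.sum_const,
          Finset.card_univ]
        have hcard : Fintype.card (BS ℓ) = 2 ^ ℓ := by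
          simp [BS]
        rw [hcard, ← Nat.cast_smul_eq_nsmul ℂ, smul_smul, ← Complex.ofReal_natCast,
          ← Complex.ofReal_mul]
        have hs : ((2 ^ ℓ : ℕ) : ℝ) * c = 1 := by
          rw [hcdef]; push_cast; field_simp
        rw [hs]
        simp
    -- value of the combined POVM
    set T : BS ℓ → ℝ :=
      fun x₁ => ∑ x₂, X (x₁, x₂) * ((G x₁ x₂ * ρ (x₁, x₂)).trace).re with hTdef
    have hTnn : ∀ x₁, 0 ≤ T x₁ := fun x₁ => Finset.sum_nonneg fun x₂ _ =>
      mul_nonneg (hX.1 _) (psd_trace_mul_re_nonneg ((hG1 x₁).1 x₂) (hρ _).1)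
    have hV : (∑ p, X p * ((F p * ρ p).trace).re) = c * ∑ x₁, T x₁ := by
      rw [Fintype.sum_prod_type, Finset.mul_sum]
      refine Finset.sum_congr rfl fun x₁ _ => ?_
      rw [hTdef, Finset.mul_sum]
      refine Finset.sum_congr rfl fun x₂ _ => ?_
      rw [hFdef]
      simp only [Matrix.smul_mul, Matrix.trace_smul, smul_eq_mul,
        Complex.re_ofReal_mul]
      ring
    have hV1 : c * ∑ x₁, T x₁ ≤ (2:ℝ) ^ (-k) := by
      rw [← hV]
      exact (le_guessProb X ρ hX.1 hρ hF).trans (guessProb_le_rpow X ρ hk)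
    have hV2 : ((2:ℝ) ^ (-r) - ε) * S ≤ ∑ x₁, T x₁ := by
      rw [hSdef, Finset.mul_sum]
      calc ∑ x₁ ∈ B, ((2:ℝ) ^ (-r) - ε) * ∑ x₂, X (x₁, x₂)
          ≤ ∑ x₁ ∈ B, T x₁ :=
            Finset.sum_le_sum fun x₁ hx₁ => hG2 x₁ hx₁
        _ ≤ ∑ x₁, T x₁ :=
            Finset.sum_le_sum_of_subset_of_nonneg (Finset.subset_univ B)
              (fun x₁ _ _ => hTnn x₁)
    have : ∑ x₁, T x₁ ≤ (2:ℝ) ^ ℓ * (2:ℝ) ^ (-k) := by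
      rw [hcdef] at hV1
      have h2ℓ : (0:ℝ) < (2:ℝ) ^ ℓ := by positivity
      calc ∑ x₁, T x₁ = (2:ℝ) ^ ℓ * (((2:ℝ) ^ ℓ)⁻¹ * ∑ x₁, T x₁) := by
            field_simp
        _ ≤ (2:ℝ) ^ ℓ * (2:ℝ) ^ (-k) :=
            mul_le_mul_of_nonneg_left hV1 h2ℓ.le
    linarith
  have hmain : (2:ℝ) ^ (-r) * S ≤ (2:ℝ) ^ ℓ * (2:ℝ) ^ (-k) := by
    refine le_of_forall_pos_le_add fun ε hε => ?_
    have := key ε hε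
    nlinarith [hS0, hS1]
  have h2r : (0:ℝ) < (2:ℝ) ^ (-r) := Real.rpow_pos_of_pos two_pos _
  have hrr : (2:ℝ) ^ r * (2:ℝ) ^ (-r) = 1 := by
    rw [← Real.rpow_add two_pos]; norm_num
  calc S = ((2:ℝ) ^ r * (2:ℝ) ^ (-r)) * S := by rw [hrr, one_mul]
    _ = (2:ℝ) ^ r * ((2:ℝ) ^ (-r) * S) := by ring
    _ ≤ (2:ℝ) ^ r * ((2:ℝ) ^ ℓ * (2:ℝ) ^ (-k)) :=
        mul_le_mul_of_nonneg_left hmain (Real.rpow_pos_of_pos two_pos _).le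
    _ = (2:ℝ) ^ ℓ * (2:ℝ) ^ r * (2:ℝ) ^ (-k) := by ring


end QExt
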